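/- Suppose H = H_1 ⊗ H_2 is a tensor product of finite-dimensional complex Hilbert spaces, and the bases are of product form: a_{(m,n)} = a¹_m ⊗ a²_n and a'_{(m,n)} = a'¹_m ⊗ a'²_n, where {a¹_m}, {a'¹_m} are orthonormal bases of H_1 and {a²_n}, {a'²_n} are orthonormal bases of H_2. Then ε(𝒜,𝒜') ≥ ε(𝒜¹,𝒜'¹), where ε(𝒜¹,𝒜'¹) is the state-independent error of the measurements on H_1 given by {a¹_m} and {a'¹_m}. -/

import Mathlib

open scoped ComplexInnerProductSpace

noncomputable section

variable {H : Type*} [NormedAddCommGroup H] [InnerProductSpace ℂ H] [FiniteDimensional ℂ H]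
variable {ι ι' : Type*} [Fintype ι] [Fintype ι']

/-- The rank-one projector `|v⟩⟨v|`. -/
def ketbra (v : H) : H →ₗ[ℂ] H where
  toFun x := ⟪v, x⟫ • v
  map_add' x y := by simp [inner_add_right, add_smul]
  map_smul' c x := by simp [inner_smul_right, mul_smul]

/-- A density operator: self-adjoint, positive semidefinite, trace one. -/
def IsDensity (ρ : H →ₗ[ℂ] H) : Prop :=
  LinearMap.IsSymmetric ρ ∧ (∀ x : H, 0 ≤ (⟪x, ρ x⟫).re) ∧
    LinearMap.trace ℂ H ρ = 1

/-- The state-dependent error `ε_ρ(𝒜,𝒜')`. -/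
def sdError (a a' : ι → H) (ρ : H →ₗ[ℂ] H) : ℝ :=
  ⨆ i : ι, ‖LinearMap.trace ℂ H (ρ ∘ₗ (ketbra (a i) - ketbra (a' i)))‖

/-- The state-independent error `ε(𝒜,𝒜')`. -/
def siError (a a' : ι → H) : ℝ :=
  ⨆ ρ : {ρ : H →ₗ[ℂ] H // IsDensity ρ}, sdError a a' ρ.1

/-- The operator `|b_i⟩⟨b_i| − Σ_j |⟨a'_j, b_i⟩|² |a'_j⟩⟨a'_j|`. -/
def distOp (a' : ι' → H) (b : ι → H) (i : ι) : H →ₗ[ℂ] H :=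
  ketbra (b i) - ∑ j : ι', (‖⟪a' j, b i⟫‖ ^ 2 : ℂ) • ketbra (a' j)

/-- The state-dependent disturbance `η_ρ(𝒜',ℬ)`. -/
def sdDist (a' : ι' → H) (b : ι → H) (ρ : H →ₗ[ℂ] H) : ℝ :=
  ⨆ i : ι, ‖LinearMap.trace ℂ H (ρ ∘ₗ distOp a' b i)‖

/-- The state-independent disturbance `η(𝒜',ℬ)`. -/
def siDist (a' : ι' → H) (b : ι → H) : ℝ :=
  ⨆ ρ : {ρ : H →ₗ[ℂ] H // IsDensity ρ}, sdDist a' b ρ.1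

/-- The state-independent overall error `Δ(𝒜,𝒜',ℬ)`. -/
def siOverall (a a' b : ι → H) : ℝ :=
  ⨆ ρ : {ρ : H →ₗ[ℂ] H // IsDensity ρ}, (sdError a a' ρ.1 + sdDist a' b ρ.1)

section AuxiliaryLemmas

set_option linter.unusedSectionVars false
set_option maxHeartbeats 1000000

@[simp] lemma ketbra_apply (v x : H) : ketbra v x = ⟪v, x⟫ • v := rfl

lemma trace_eq_sum_inner' {κ : Type*} [Fintype κ] [DecidableEq κ]
    (b : OrthonormalBasis κ ℂ H) (f : H →ₗ[ℂ] H) :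
    LinearMap.trace ℂ H f = ∑ i, ⟪b i, f (b i)⟫ := by
  rw [LinearMap.trace_eq_matrix_trace ℂ b.toBasis f, Matrix.trace]
  congr 1; ext i
  rw [Matrix.diag_apply, LinearMap.toMatrix_apply, OrthonormalBasis.coe_toBasis,
    OrthonormalBasis.coe_toBasis_repr_apply, OrthonormalBasis.repr_apply_apply]

lemma sum_diag_le_one {κ : Type*} [Fintype κ] {ρ : H →ₗ[ℂ] H} (hρ : IsDensity ρ)
    {f : κ → H} (hf : Orthonormal ℂ f) : ∑ i, (⟪f i, ρ (f i)⟫).re ≤ 1 := by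
  classical
  obtain ⟨u, b, hsu, hb⟩ := hf.toSubtypeRange.exists_orthonormalBasis_extension
  have htr : (1 : ℂ) = ∑ i : u, ⟪b i, ρ (b i)⟫ := by
    rw [← trace_eq_sum_inner' b ρ, hρ.2.2]
  have h1 : (1 : ℝ) = ∑ x ∈ u, (⟪x, ρ x⟫).re := by
    have := congrArg Complex.re htr
    rw [← Finset.sum_coe_sort u fun x => (⟪x, ρ x⟫).re]
    simp [hb, Complex.re_sum] at this
    exact this.trans (Finset.sum_coe_sort u fun x => (⟪x, ρ x⟫).re).symm
  have hinj : Function.Injective f := hf.linearIndependent.injective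
  have hmap : ∑ i, (⟪f i, ρ (f i)⟫).re
      = ∑ x ∈ Finset.univ.image f, (⟪x, ρ x⟫).re := by
    rw [Finset.sum_image (fun a _ b _ h => hinj h)]
  rw [hmap, h1]
  refine Finset.sum_le_sum_of_subset_of_nonneg ?_ (fun x _ _ => hρ.2.1 x)
  intro x hx
  simp only [Finset.mem_image] at hx
  obtain ⟨i, _, rfl⟩ := hx
  exact hsu ⟨i, rfl⟩

lemma exp_le_one {ρ : H →ₗ[ℂ] H} (hρ : IsDensity ρ) {v : H} (hv : ‖v‖ = 1) :
    (⟪v, ρ v⟫).re ≤ 1 := by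
  have ho : Orthonormal ℂ (fun _ : Unit => v) := by
    constructor
    · intro i; simpa using hv
    · intro i j h; exact absurd rfl h
  simpa using sum_diag_le_one hρ ho

lemma exp_pair_le_one {ρ : H →ₗ[ℂ] H} (hρ : IsDensity ρ) {v w : H}
    (hv : ‖v‖ = 1) (hw : ‖w‖ = 1) (hvw : ⟪v, w⟫ = 0) :
    (⟪v, ρ v⟫).re + (⟪w, ρ w⟫).re ≤ 1 := by
  have hwv : ⟪w, v⟫ = 0 := by rw [← inner_conj_symm, hvw]; simp
  have ho : Orthonormal ℂ (fun b : Bool => if b then v else w) := by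
    constructor
    · intro i; cases i <;> simpa
    · intro i j h; cases i <;> cases j <;> simp_all
  simpa [Fintype.sum_bool] using sum_diag_le_one hρ ho

lemma semi_cs {ρ : H →ₗ[ℂ] H} (hρ : IsDensity ρ) (x y : H) :
    ‖⟪x, ρ y⟫‖ ^ 2 ≤ (⟪x, ρ x⟫).re * (⟪y, ρ y⟫).re := by
  set z := ⟪x, ρ y⟫ with hz
  set p := (⟪x, ρ x⟫).re
  set q := (⟪y, ρ y⟫).re
  by_cases hz0 : z = 0
  · rw [hz0]; simpa using mul_nonneg (hρ.2.1 x) (hρ.2.1 y)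
  have hyx : ⟪y, ρ x⟫ = starRingEnd ℂ z := by
    rw [hz, ← hρ.1 x y, inner_conj_symm]
  set u : ℂ := (‖z‖ : ℂ)⁻¹ * z with hu
  have hnz : (‖z‖ : ℂ) ≠ 0 := by simpa using norm_ne_zero_iff.mpr hz0
  have huz : starRingEnd ℂ u * z = (‖z‖ : ℂ) := by
    have habs : ((‖z‖ : ℝ) : ℂ) ≠ 0 := hnz
    rw [hu, map_mul, map_inv₀, Complex.conj_ofReal, mul_assoc, RCLike.conj_mul]
    push_cast; rw [sq]; field_simp
    rfl
  have huu : starRingEnd ℂ u * u = 1 := by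
    have habs : ((‖z‖ : ℝ) : ℂ) ≠ 0 := hnz
    rw [hu, map_mul, map_inv₀, Complex.conj_ofReal, mul_mul_mul_comm, RCLike.conj_mul]
    push_cast; rw [sq]; field_simp
    rfl
  have key : ∀ t : ℝ, 0 ≤ p * (t * t) + (2 * ‖z‖) * t + q := by
    intro t
    have h0 := hρ.2.1 (((t : ℂ) * u) • x + y)
    have expand : ⟪((t : ℂ) * u) • x + y, ρ (((t : ℂ) * u) • x + y)⟫
        = (starRingEnd ℂ ((t:ℂ) * u) * ((t:ℂ) * u)) * ⟪x, ρ x⟫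
          + starRingEnd ℂ ((t:ℂ)*u) * z + ((t:ℂ)*u) * starRingEnd ℂ z + ⟪y, ρ y⟫ := by
      simp only [map_add, map_smul, inner_add_left, inner_add_right, inner_smul_left,
        inner_smul_right, hyx, ← hz]
      ring
    have e1 : (starRingEnd ℂ ((t:ℂ) * u) * ((t:ℂ) * u)) = ((t*t : ℝ) : ℂ) := by
      rw [map_mul, Complex.conj_ofReal, mul_mul_mul_comm, huu]; push_cast; ring
    have e2 : starRingEnd ℂ ((t:ℂ)*u) * z = ((t * ‖z‖ : ℝ) : ℂ) := by
      rw [map_mul, Complex.conj_ofReal, mul_assoc, huz]; push_cast; ring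
    have e3 : ((t:ℂ)*u) * starRingEnd ℂ z = ((t * ‖z‖ : ℝ) : ℂ) := by
      have : ((t:ℂ)*u) * starRingEnd ℂ z = starRingEnd ℂ (starRingEnd ℂ ((t:ℂ)*u) * z) := by
        rw [map_mul]; simp
      rw [this, e2, Complex.conj_ofReal]
    rw [expand, e1, e2, e3] at h0
    simp only [Complex.add_re, Complex.ofReal_re, Complex.re_ofReal_mul] at h0
    convert h0 using 1
    simp [p, q]
    ring
  have hd := discrim_le_zero key
  rw [discrim] at hd
  nlinarith [norm_nonneg z]

lemma trace_comp_ketbra (ρ : H →ₗ[ℂ] H) (v : H) :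
    LinearMap.trace ℂ H (ρ ∘ₗ ketbra v) = ⟪v, ρ v⟫ := by
  classical
  let b := stdOrthonormalBasis ℂ H
  rw [trace_eq_sum_inner' b]
  have h : ∀ i, ⟪b i, (ρ ∘ₗ ketbra v) (b i)⟫ = ⟪v, b i⟫ * ⟪b i, ρ v⟫ := by
    intro i; simp [inner_smul_right, mul_comm]
  simp_rw [h]
  exact b.sum_inner_mul_inner v (ρ v)

lemma ketbra_isDensity {ψ : H} (hψ : ⟪ψ, ψ⟫ = (1 : ℂ)) : IsDensity (ketbra ψ) := by
  refine ⟨?_, ?_, ?_⟩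
  · intro x y
    simp only [ketbra_apply, inner_smul_left, inner_smul_right]
    rw [inner_conj_symm]; ring
  · intro x
    simp only [ketbra_apply, inner_smul_right]
    rw [← inner_conj_symm x ψ, Complex.mul_conj']
    norm_cast
    positivity
  · have : ketbra ψ = (LinearMap.id : H →ₗ[ℂ] H) ∘ₗ ketbra ψ := by ext x; simp
    rw [this, trace_comp_ketbra]
    simpa using hψ


lemma exp_real {ρ : H →ₗ[ℂ] H} (hsym : LinearMap.IsSymmetric ρ) (v : H) :
    ⟪v, ρ v⟫ = ((⟪v, ρ v⟫).re : ℂ) := by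
  have : starRingEnd ℂ ⟪v, ρ v⟫ = ⟪v, ρ v⟫ := by
    rw [inner_conj_symm, hsym v v]
  exact (Complex.conj_eq_iff_re.mp this).symm

lemma diff_re_le {ρ : H →ₗ[ℂ] H} (hρ : IsDensity ρ) {a a' : H}
    (ha : ‖a‖ = 1) (ha' : ‖a'‖ = 1) :
    (⟪a, ρ a⟫).re - (⟪a', ρ a'⟫).re ≤ Real.sqrt (1 - ‖⟪a, a'⟫‖ ^ 2) := by
  obtain ⟨hsym, hpos, htr⟩ := hρ
  set c := ⟪a, a'⟫ with hc
  set k := ‖c‖ with hkdef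
  have hk0 : 0 ≤ k := norm_nonneg c
  have hk1 : k ≤ 1 := by
    have := norm_inner_le_norm (𝕜 := ℂ) a a'
    rwa [ha, ha', mul_one] at this
  set s := Real.sqrt (1 - k ^ 2) with hsdef
  have hs0 : 0 ≤ s := Real.sqrt_nonneg _
  have hk2le : k ^ 2 ≤ 1 := by
    calc k ^ 2 = k * k := sq k
      _ ≤ 1 * 1 := mul_le_mul hk1 hk1 hk0 zero_le_one
      _ = 1 := by ring
  have hs2 : s ^ 2 = 1 - k ^ 2 := Real.sq_sqrt (by linarith)
  have hs1 : s ≤ 1 := by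
    rw [hsdef]
    calc Real.sqrt (1 - k ^ 2) ≤ Real.sqrt 1 := Real.sqrt_le_sqrt (by linarith [sq_nonneg k])
      _ = 1 := Real.sqrt_one
  have haa : ⟪a, a⟫ = (1 : ℂ) := by
    rw [inner_self_eq_norm_sq_to_K, ha]; norm_num
  have ha'a' : ⟪a', a'⟫ = (1 : ℂ) := by
    rw [inner_self_eq_norm_sq_to_K, ha']; norm_num
  have ha'a : ⟪a', a⟫ = starRingEnd ℂ c := by rw [hc, inner_conj_symm]
  have hcc : c * starRingEnd ℂ c = ((k ^ 2 : ℝ) : ℂ) := by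
    rw [Complex.mul_conj']; norm_num [hkdef]
  set w := a' - c • a with hw
  have haw : ⟪a, w⟫ = 0 := by
    simp [hw, inner_sub_right, inner_smul_right, haa, hc, ha]
  have hww : ⟪w, w⟫ = ((1 - k ^ 2 : ℝ) : ℂ) := by
    have expand : ⟪w, w⟫ = 1 - c * starRingEnd ℂ c := by
      simp only [hw, inner_sub_left, inner_sub_right, inner_smul_left, inner_smul_right,
        haa, ha'a', ha'a, ← hc]
      ring
    rw [expand, hcc]; push_cast; ring
  have hwnorm : ‖w‖ ^ 2 = 1 - k ^ 2 := by
    rw [← inner_self_eq_norm_sq (𝕜 := ℂ) (E := H) w, hww]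
    exact RCLike.ofReal_re _
  by_cases hw0 : w = 0
  · have hk2 : k ^ 2 = 1 := by
      have : ‖w‖ ^ 2 = 0 := by rw [hw0]; simp
      linarith [hwnorm]
    have ha'eq : a' = c • a := by
      have := sub_eq_zero.mp hw0
      exact this
    have : ⟪a', ρ a'⟫ = ⟪a, ρ a⟫ := by
      rw [ha'eq, map_smul, inner_smul_left, inner_smul_right, ← mul_assoc,
        mul_comm (starRingEnd ℂ c) c, hcc, hk2]
      norm_num
    rw [this]
    simpa using hs0
  -- main case
  have hwpos : 0 < ‖w‖ := norm_pos_iff.mpr hw0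
  have hwns : ‖w‖ = s := by
    rw [hsdef, ← hwnorm, Real.sqrt_sq hwpos.le]
  have hspos : 0 < s := hwns ▸ hwpos
  set p := (⟪a, ρ a⟫).re with hp
  set r := (⟪w, ρ w⟫).re with hr
  have hp0 : 0 ≤ p := hpos a
  have hr0 : 0 ≤ r := hpos w
  set z := ⟪a, ρ w⟫ with hz
  set n := ‖z‖ with hn
  have hn0 : 0 ≤ n := norm_nonneg z
  have hcs : n ^ 2 ≤ p * r := semi_cs ⟨hsym, hpos, htr⟩ a w
  -- the diagonal-sum constraint
  have hsum : s ^ 2 * p + r ≤ s ^ 2 := by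
    set wn : H := ((‖w‖ : ℂ))⁻¹ • w with hwndef
    have hwn1 : ‖wn‖ = 1 := by
      rw [hwndef, norm_smul]
      simp [hwpos.ne']
    have hawn : ⟪a, wn⟫ = 0 := by
      rw [hwndef, inner_smul_right, haw]; simp
    have hpair := exp_pair_le_one ⟨hsym, hpos, htr⟩ ha hwn1 hawn
    have hexp : (⟪wn, ρ wn⟫).re = ‖w‖⁻¹ * (‖w‖⁻¹ * r) := by
      rw [hwndef, map_smul, inner_smul_left, inner_smul_right, map_inv₀,
        Complex.conj_ofReal]
      rw [show ((‖w‖ : ℂ))⁻¹ = ((‖w‖⁻¹ : ℝ) : ℂ) by push_cast; ring]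
      rw [Complex.re_ofReal_mul, Complex.re_ofReal_mul]
    rw [hexp, hwns] at hpair
    have : s ^ 2 * (p + s⁻¹ * (s⁻¹ * r)) ≤ s ^ 2 * 1 :=
      mul_le_mul_of_nonneg_left hpair (by positivity)
    calc s ^ 2 * p + r = s ^ 2 * (p + s⁻¹ * (s⁻¹ * r)) := by
          field_simp
      _ ≤ s ^ 2 := by simpa using this
  -- expansion of the a' expectation
  have hwa : ⟪w, ρ a⟫ = starRingEnd ℂ z := by
    rw [hz, ← hsym a w, inner_conj_symm]
  have ha'exp : (⟪a', ρ a'⟫).re = k ^ 2 * p + 2 * (starRingEnd ℂ c * z).re + r := by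
    have hsplit : a' = c • a + w := by rw [hw]; abel
    have expand : ⟪a', ρ a'⟫ = (c * starRingEnd ℂ c) * ⟪a, ρ a⟫
        + starRingEnd ℂ c * z + c * starRingEnd ℂ z + ⟪w, ρ w⟫ := by
      rw [hsplit]
      simp only [map_add, map_smul, inner_add_left, inner_add_right,
        inner_smul_left, inner_smul_right, hwa, ← hz]
      ring
    rw [expand, hcc]
    have hconj : (c * starRingEnd ℂ z).re = (starRingEnd ℂ c * z).re := by
      have : c * starRingEnd ℂ z = starRingEnd ℂ (starRingEnd ℂ c * z) := by
        rw [map_mul]; simp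
      rw [this, Complex.conj_re]
    simp only [Complex.add_re, Complex.re_ofReal_mul, hconj]
    ring
  have hre_bound : -(k * n) ≤ (starRingEnd ℂ c * z).re := by
    have h1 : |(starRingEnd ℂ c * z).re| ≤ ‖starRingEnd ℂ c * z‖ := Complex.abs_re_le_norm _
    have h2 : ‖starRingEnd ℂ c * z‖ = k * n := by
      rw [norm_mul]; simp [hkdef, hn]
    nlinarith [abs_nonneg ((starRingEnd ℂ c * z).re), neg_abs_le ((starRingEnd ℂ c * z).re)]
  -- reduce to the scalar inequality
  have hmain : s ^ 2 * p - r + 2 * (k * n) ≤ s := by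
    set q := Real.sqrt p with hqdef
    set v := Real.sqrt r with hvdef
    have hq : q ^ 2 = p := Real.sq_sqrt hp0
    have hv : v ^ 2 = r := Real.sq_sqrt hr0
    have hq0 : 0 ≤ q := Real.sqrt_nonneg _
    have hv0 : 0 ≤ v := Real.sqrt_nonneg _
    have hnqv : n ≤ q * v := by
      have : n = Real.sqrt (n ^ 2) := (Real.sqrt_sq hn0).symm
      rw [this, hqdef, hvdef, ← Real.sqrt_mul hp0]
      exact Real.sqrt_le_sqrt hcs
    set e := Real.sqrt (1 - s) with hedef
    set f := Real.sqrt (1 + s) with hfdef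
    have he : e ^ 2 = 1 - s := Real.sq_sqrt (by linarith)
    have hf : f ^ 2 = 1 + s := Real.sq_sqrt (by linarith)
    have hef : e * f = k := by
      rw [hedef, hfdef, ← Real.sqrt_mul (by linarith)]
      have : (1 - s) * (1 + s) = k ^ 2 := by
        rw [show (1 - s) * (1 + s) = 1 - s ^ 2 by ring, hs2]; ring
      rw [this, Real.sqrt_sq hk0]
    have h1 : s^2*q^2*e^2 = s^2*q^2*(1-s) := by rw [he]
    have h2 : v^2*f^2 = v^2*(1+s) := by rw [hf]
    have h3 : (s*q*e)*(v*f) = s*q*v*k := by rw [show (s*q*e)*(v*f) = s*q*v*(e*f) by ring, hef]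
    have hkey : 2*(s*q*v*k) ≤ s^2*q^2*(1-s) + v^2*(1+s) := by
      calc 2*(s*q*v*k) = 2*((s*q*e)*(v*f)) := by rw [h3]
        _ ≤ (s*q*e)^2 + (v*f)^2 := by
            have hsq := sq_nonneg (s*q*e - v*f)
            have e0 : (s*q*e - v*f)^2 = (s*q*e)^2 + (v*f)^2 - 2*((s*q*e)*(v*f)) := by ring
            linarith [e0 ▸ hsq]
        _ = s^2*q^2*e^2 + v^2*f^2 := by ring
        _ = s^2*q^2*(1-s) + v^2*(1+s) := by rw [h1, h2]
    have h2kn : (2*s*k)*n ≤ (2*s*k)*(q*v) :=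
      mul_le_mul_of_nonneg_left hnqv (by positivity)
    have hq2 : s^2*q^2 = s^2*p := by rw [hq]
    have hq3 : s^3*q^2 = s^3*p := by rw [hq]
    have hv2 : s*v^2 = s*r := by rw [hv]
    have key3 : 2*s*k*(q*v) ≤ s^2*p - s^3*p + r + s*r := by
      have e : s^2*q^2*(1-s) + v^2*(1+s) = s^2*q^2 - s^3*q^2 + v^2 + s*v^2 := by ring
      rw [e] at hkey
      have hv' : v^2 = r := hv
      linarith [hkey, hq2, hq3, hv2, hv']
    have hfinal : s * (s ^ 2 * p - r + 2 * (k * n)) ≤ s * s := by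
      have e : s * (s ^ 2 * p - r + 2 * (k * n)) = s^3*p - s*r + (2*s*k)*n := by ring
      rw [e]
      have e2 : (2*s*k)*(q*v) = 2*s*k*(q*v) := by ring
      rw [e2] at h2kn
      have hss : s^2*p + r ≤ s*s := by
        have : s*s = s^2 := by ring
        linarith [hsum, this.ge]
      linarith [h2kn, key3, hss]
    exact le_of_mul_le_mul_left hfinal hspos
  calc (⟪a, ρ a⟫).re - (⟪a', ρ a'⟫).re
      = p - (k ^ 2 * p + 2 * (starRingEnd ℂ c * z).re + r) := by rw [ha'exp]
    _ ≤ p - k ^ 2 * p - r + 2 * (k * n) := by linarith [hre_bound]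
    _ = s ^ 2 * p - r + 2 * (k * n) := by rw [hs2]; ring
    _ ≤ s := hmain

/-- There is a pure state achieving the maximal error `√(1-|⟨a,a'⟩|²)`. -/
lemma exists_pure_achieving {a a' : H} (ha : ‖a‖ = 1) (ha' : ‖a'‖ = 1) :
    ∃ ρ : H →ₗ[ℂ] H, IsDensity ρ ∧
      ⟪a, ρ a⟫ - ⟪a', ρ a'⟫ = ((Real.sqrt (1 - ‖⟪a, a'⟫‖ ^ 2) : ℝ) : ℂ) := by
  classical
  set c := ⟪a, a'⟫ with hc
  set k := ‖c‖ with hkdef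
  have hk0 : 0 ≤ k := norm_nonneg c
  have hk1 : k ≤ 1 := by
    have := norm_inner_le_norm (𝕜 := ℂ) a a'
    rwa [ha, ha', mul_one] at this
  have hk2le : k ^ 2 ≤ 1 := by
    calc k ^ 2 = k * k := sq k
      _ ≤ 1 * 1 := mul_le_mul hk1 hk1 hk0 zero_le_one
      _ = 1 := by ring
  set s := Real.sqrt (1 - k ^ 2) with hsdef
  have hs0 : 0 ≤ s := Real.sqrt_nonneg _
  have hs2 : s ^ 2 = 1 - k ^ 2 := Real.sq_sqrt (by linarith)
  have haa : ⟪a, a⟫ = (1 : ℂ) := by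
    rw [inner_self_eq_norm_sq_to_K, ha]; norm_num
  have ha'a' : ⟪a', a'⟫ = (1 : ℂ) := by
    rw [inner_self_eq_norm_sq_to_K, ha']; norm_num
  have ha'a : ⟪a', a⟫ = starRingEnd ℂ c := by rw [hc, inner_conj_symm]
  have hcc : c * starRingEnd ℂ c = ((k ^ 2 : ℝ) : ℂ) := by
    rw [Complex.mul_conj']; norm_num [hkdef]
  by_cases hks : s = 0
  · -- degenerate case : k = 1, take ρ = |a⟩⟨a|
    have hk2 : k ^ 2 = 1 := by
      have : 1 - k ^ 2 = 0 := by
        have := hs2; rw [hks] at this; simpa using this.symm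
      linarith
    refine ⟨ketbra a, ketbra_isDensity haa, ?_⟩
    simp only [ketbra_apply, inner_smul_right, haa, ← hc, ha'a]
    rw [hcc, hk2, hks]
    norm_num
  · have hspos : 0 < s := lt_of_le_of_ne hs0 (Ne.symm hks)
    -- phase factor u
    set u : ℂ := if c = 0 then 1 else (k : ℂ)⁻¹ * c with hu
    have hP1 : starRingEnd ℂ u * u = 1 := by
      by_cases hc0 : c = 0
      · simp [hu, hc0]
      · have hkne : (k : ℂ) ≠ 0 := by
          simp only [ne_eq, Complex.ofReal_eq_zero]
          simpa [hkdef] using norm_ne_zero_iff.mpr hc0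
        simp only [hu, if_neg hc0, map_mul, map_inv₀, Complex.conj_ofReal]
        rw [mul_mul_mul_comm, mul_comm (starRingEnd ℂ c) c, hcc]
        push_cast
        field_simp
    have hP2 : u * starRingEnd ℂ c = ((k : ℝ) : ℂ) := by
      by_cases hc0 : c = 0
      · simp [hu, hc0, hkdef]
      · have hkne : (k : ℂ) ≠ 0 := by
          simp only [ne_eq, Complex.ofReal_eq_zero]
          simpa [hkdef] using norm_ne_zero_iff.mpr hc0
        simp only [hu, if_neg hc0]
        rw [mul_assoc, mul_comm c (starRingEnd ℂ c), mul_comm (starRingEnd ℂ c) c, hcc]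
        push_cast
        rw [sq]
        field_simp
    set b : H := ((s : ℂ))⁻¹ • (a' - c • a) with hb
    have hsne : ((s : ℝ) : ℂ) ≠ 0 := by
      simp only [ne_eq, Complex.ofReal_eq_zero]; exact hspos.ne'
    have hab : ⟪a, b⟫ = 0 := by
      simp [hb, inner_smul_right, inner_sub_right, inner_smul_right, haa, ← hc, ha]
    have hba : ⟪b, a⟫ = 0 := by
      rw [← inner_conj_symm, hab]; simp
    have hbb : ⟪b, b⟫ = 1 := by
      simp only [hb, inner_smul_left, inner_smul_right, inner_sub_left, inner_sub_right,
        inner_smul_right, inner_smul_left, haa, ha'a', ha'a, ← hc, map_inv₀, Complex.conj_ofReal]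
      rw [mul_comm (starRingEnd ℂ c) c, hcc]
      field_simp
      norm_cast
      rw [hs2]
      simp
    have ha'b : ⟪a', b⟫ = ((s : ℝ) : ℂ) := by
      simp only [hb, inner_smul_right, inner_sub_right, inner_smul_right, ha'a', ha'a, ← hc]
      rw [hcc]
      field_simp
      norm_cast
      linarith [hs2]
    have hs1 : s ≤ 1 := by
      rw [hsdef]
      calc Real.sqrt (1 - k ^ 2) ≤ Real.sqrt 1 := Real.sqrt_le_sqrt (by linarith [sq_nonneg k])
        _ = 1 := Real.sqrt_one
    set x : ℝ := Real.sqrt ((1+s)/2) with hx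
    set β : ℝ := Real.sqrt ((1-s)/2) with hβ
    have hx2 : x ^ 2 = (1+s)/2 := Real.sq_sqrt (by linarith)
    have hβ2 : β ^ 2 = (1-s)/2 := Real.sq_sqrt (by linarith)
    have hxβ : x * β = k / 2 := by
      rw [hx, hβ, ← Real.sqrt_mul (by linarith)]
      rw [show ((1+s)/2) * ((1-s)/2) = (1 - s^2)/4 by ring, hs2,
        show (1 - (1 - k^2))/4 = (k/2)^2 by ring]
      exact Real.sqrt_sq (by positivity)
    set ψ : H := ((x : ℂ) * u) • a - ((β : ℂ)) • b with hψdef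
    have hψψ : ⟪ψ, ψ⟫ = 1 := by
      simp only [hψdef, inner_sub_left, inner_sub_right, inner_smul_left, inner_smul_right,
        hab, hba, hbb, haa, map_mul, Complex.conj_ofReal, mul_zero, mul_one, zero_mul,
        sub_zero, zero_sub, mul_neg, sub_neg_eq_add]
      rw [show ((x:ℂ) * u * ((x:ℂ) * starRingEnd ℂ u) : ℂ)
          = ((x:ℂ) * (x:ℂ)) * (starRingEnd ℂ u * u) by ring, hP1]
      have hre : x * x * 1 + β * β = 1 := by
        rw [mul_one, show x * x = x ^ 2 from (sq x).symm,
          show β * β = β ^ 2 from (sq β).symm, hx2, hβ2]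
        ring
      exact_mod_cast hre
    have haψ : ⟪a, ψ⟫ = (x : ℂ) * u := by
      rw [hψdef, inner_sub_right, inner_smul_right, inner_smul_right, haa, hab]
      ring
    have ha'ψ : ⟪a', ψ⟫ = ((x * k - β * s : ℝ) : ℂ) := by
      simp only [hψdef, inner_sub_right, inner_smul_right, ha'a, ha'b]
      rw [show ((x:ℂ) * u * starRingEnd ℂ c : ℂ) = (x:ℂ) * (u * starRingEnd ℂ c) by ring, hP2]
      push_cast; ring
    refine ⟨ketbra ψ, ketbra_isDensity hψψ, ?_⟩
    have expA : ⟪a, (ketbra ψ) a⟫ = ((x ^ 2 : ℝ) : ℂ) := by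
      simp only [ketbra_apply, inner_smul_right]
      rw [← inner_conj_symm ψ a]
      rw [haψ, map_mul, Complex.conj_ofReal]
      rw [show ((x:ℂ) * starRingEnd ℂ u * ((x:ℂ) * u) : ℂ)
          = ((x:ℂ) * (x:ℂ)) * (starRingEnd ℂ u * u) by ring, hP1]
      push_cast; ring
    have expA' : ⟪a', (ketbra ψ) a'⟫ = (((x * k - β * s) ^ 2 : ℝ) : ℂ) := by
      simp only [ketbra_apply, inner_smul_right]
      rw [← inner_conj_symm ψ a']
      rw [ha'ψ, Complex.conj_ofReal]
      push_cast; ring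
    rw [expA, expA']
    have hgoal : x ^ 2 - (x * k - β * s) ^ 2 = s := by
      have e : x ^ 2 - (x * k - β * s) ^ 2
          = (1 - k^2) * x^2 - s^2 * β^2 + 2*k*s*(x*β) := by ring
      rw [e, hx2, hβ2, hxβ]
      linear_combination ((s - 1)/2) * hs2
    rw [show ((x ^ 2 : ℝ) : ℂ) - (((x * k - β * s) ^ 2 : ℝ) : ℂ)
        = ((x ^ 2 - (x * k - β * s) ^ 2 : ℝ) : ℂ) by push_cast; ring, hgoal]

lemma exp_norm_le_one {ρ : H →ₗ[ℂ] H} (hρ : IsDensity ρ) {v : H} (hv : ‖v‖ = 1) :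
    ‖⟪v, ρ v⟫‖ ≤ 1 := by
  rw [exp_real hρ.1 v, Complex.norm_real, Real.norm_eq_abs]
  rw [abs_of_nonneg (hρ.2.1 v)]
  exact exp_le_one hρ hv

lemma diff_norm_le {ρ : H →ₗ[ℂ] H} (hρ : IsDensity ρ) {a a' : H}
    (ha : ‖a‖ = 1) (ha' : ‖a'‖ = 1) :
    ‖⟪a, ρ a⟫ - ⟪a', ρ a'⟫‖ ≤ Real.sqrt (1 - ‖⟪a, a'⟫‖ ^ 2) := by
  rw [exp_real hρ.1 a, exp_real hρ.1 a']
  rw [show (((⟪a, ρ a⟫).re : ℂ) - ((⟪a', ρ a'⟫).re : ℂ))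
      = (((⟪a, ρ a⟫).re - (⟪a', ρ a'⟫).re : ℝ) : ℂ) by push_cast; ring]
  rw [Complex.norm_real, Real.norm_eq_abs]
  rw [abs_le]
  constructor
  · have h := diff_re_le hρ ha' ha
    rw [← norm_inner_symm a a'] at h
    linarith
  · exact diff_re_le hρ ha ha'

lemma trace_comp_ketbra_sub (ρ : H →ₗ[ℂ] H) (v w : H) :
    LinearMap.trace ℂ H (ρ ∘ₗ (ketbra v - ketbra w)) = ⟪v, ρ v⟫ - ⟪w, ρ w⟫ := by
  have : ρ ∘ₗ (ketbra v - ketbra w) = ρ ∘ₗ ketbra v - ρ ∘ₗ ketbra w := by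
    ext x; simp
  rw [this, map_sub, trace_comp_ketbra, trace_comp_ketbra]

lemma norm_eq_one_of_inner_one {v : H} (h : ⟪v, v⟫ = (1 : ℂ)) : ‖v‖ = 1 := by
  have h2 : ‖v‖ ^ 2 = 1 := by
    have h1 := inner_self_eq_norm_sq_to_K (𝕜 := ℂ) v
    rw [h] at h1
    have h2 : ((‖v‖ ^ 2 : ℝ) : ℂ) = 1 := by push_cast; exact h1.symm
    exact_mod_cast h2
  rw [← Real.sqrt_sq (norm_nonneg v), h2, Real.sqrt_one]

/-- densities have sdError bounded (for unit-vector families). -/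
lemma sdError_le_two [Nonempty ι] {a a' : ι → H} (ha : ∀ i, ‖a i‖ = 1) (ha' : ∀ i, ‖a' i‖ = 1)
    {ρ : H →ₗ[ℂ] H} (hρ : IsDensity ρ) : sdError a a' ρ ≤ 2 := by
  apply ciSup_le
  intro i
  rw [trace_comp_ketbra_sub]
  calc ‖⟪a i, ρ (a i)⟫ - ⟪a' i, ρ (a' i)⟫‖ ≤ ‖⟪a i, ρ (a i)⟫‖ + ‖⟪a' i, ρ (a' i)⟫‖ :=
        norm_sub_le _ _
    _ ≤ 1 + 1 := add_le_add (exp_norm_le_one hρ (ha i)) (exp_norm_le_one hρ (ha' i))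
    _ = 2 := by norm_num


end AuxiliaryLemmas

/-- for product-form measurements on a tensor product `H = H₁ ⊗ H₂`
(encoded by a bilinear map `T` that multiplies inner products and has spanning range),
the error dominates the error of the first factor. -/
theorem error_subsystem {H₁ H₂ : Type*}
    [NormedAddCommGroup H₁] [InnerProductSpace ℂ H₁] [FiniteDimensional ℂ H₁]
    [NormedAddCommGroup H₂] [InnerProductSpace ℂ H₂] [FiniteDimensional ℂ H₂]
    {d₁ d₂ : ℕ} (hd : 2 ≤ d₁ * d₂)
    (T : H₁ →ₗ[ℂ] H₂ →ₗ[ℂ] H)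
    (hT : ∀ (x u : H₁) (y v : H₂), ⟪T x y, T u v⟫ = ⟪x, u⟫ * ⟪y, v⟫)
    (hspan : Submodule.span ℂ {z : H | ∃ x y, T x y = z} = ⊤)
    (a1 a'1 : OrthonormalBasis (Fin d₁) ℂ H₁)
    (a2 a'2 : OrthonormalBasis (Fin d₂) ℂ H₂) :
    siError (⇑a1) (⇑a'1) ≤
      siError (fun p : Fin d₁ × Fin d₂ => T (a1 p.1) (a2 p.2))
              (fun p : Fin d₁ × Fin d₂ => T (a'1 p.1) (a'2 p.2)) := by
  classical
  have h0 : 0 < d₁ * d₂ := lt_of_lt_of_le (by norm_num) hd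
  have hd1 : 0 < d₁ := by
    rcases Nat.eq_zero_or_pos d₁ with h | h
    · rw [h] at h0; simp at h0
    · exact h
  have hd2 : 0 < d₂ := by
    rcases Nat.eq_zero_or_pos d₂ with h | h
    · rw [h] at h0; simp at h0
    · exact h
  haveI : Nonempty (Fin d₁) := ⟨⟨0, hd1⟩⟩
  haveI : Nonempty (Fin d₂) := ⟨⟨0, hd2⟩⟩
  set A : Fin d₁ × Fin d₂ → H := fun p => T (a1 p.1) (a2 p.2) with hA
  set A' : Fin d₁ × Fin d₂ → H := fun p => T (a'1 p.1) (a'2 p.2) with hA'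
  -- unit norms
  have hone : ∀ (m : Fin d₁), ⟪a1 m, a1 m⟫ = (1:ℂ) := fun m => by
    rw [inner_self_eq_norm_sq_to_K, a1.orthonormal.1 m]; norm_num
  have hone' : ∀ (m : Fin d₁), ⟪a'1 m, a'1 m⟫ = (1:ℂ) := fun m => by
    rw [inner_self_eq_norm_sq_to_K, a'1.orthonormal.1 m]; norm_num
  have htwo : ∀ (n : Fin d₂), ⟪a2 n, a2 n⟫ = (1:ℂ) := fun n => by
    rw [inner_self_eq_norm_sq_to_K, a2.orthonormal.1 n]; norm_num
  have htwo' : ∀ (n : Fin d₂), ⟪a'2 n, a'2 n⟫ = (1:ℂ) := fun n => by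
    rw [inner_self_eq_norm_sq_to_K, a'2.orthonormal.1 n]; norm_num
  have hAunit : ∀ p, ‖A p‖ = 1 := by
    intro p
    apply norm_eq_one_of_inner_one
    rw [hA]; simp only []
    rw [hT, hone, htwo]; norm_num
  have hA'unit : ∀ p, ‖A' p‖ = 1 := by
    intro p
    apply norm_eq_one_of_inner_one
    rw [hA']; simp only []
    rw [hT, hone', htwo']; norm_num
  -- the sup over big densities is bounded above
  have hbddBig : BddAbove (Set.range fun ρ : {ρ : H →ₗ[ℂ] H // IsDensity ρ} => sdError A A' ρ.1) := by
    refine ⟨2, ?_⟩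
    rintro x ⟨ρ, rfl⟩
    exact sdError_le_two hAunit hA'unit ρ.2
  -- densities on H₁ exist
  haveI : Nonempty {ρ : H₁ →ₗ[ℂ] H₁ // IsDensity ρ} :=
    ⟨⟨ketbra (a1 ⟨0, hd1⟩), ketbra_isDensity (hone _)⟩⟩
  apply ciSup_le
  rintro ⟨ρ₁, hρ₁⟩
  apply ciSup_le
  intro m
  rw [trace_comp_ketbra_sub]
  set p : Fin d₁ × Fin d₂ := (m, ⟨0, hd2⟩) with hp
  -- compare overlaps
  have hoverlap : ‖⟪A p, A' p⟫‖ ≤ ‖⟪a1 m, a'1 m⟫‖ := by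
    rw [hA, hA']; simp only []
    rw [hT, norm_mul]
    have h1 : ‖⟪a2 p.2, a'2 p.2⟫‖ ≤ 1 := by
      have := norm_inner_le_norm (𝕜 := ℂ) (a2 p.2) (a'2 p.2)
      rwa [a2.orthonormal.1, a'2.orthonormal.1, mul_one] at this
    exact mul_le_of_le_one_right (norm_nonneg _) h1
  have hsqrt_mono : Real.sqrt (1 - ‖⟪a1 m, a'1 m⟫‖ ^ 2)
      ≤ Real.sqrt (1 - ‖⟪A p, A' p⟫‖ ^ 2) := by
    apply Real.sqrt_le_sqrt
    have := pow_le_pow_left₀ (norm_nonneg _) hoverlap 2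
    linarith
  obtain ⟨ρ, hρ, hval⟩ := exists_pure_achieving (hAunit p) (hA'unit p)
  calc ‖⟪a1 m, ρ₁ (a1 m)⟫ - ⟪a'1 m, ρ₁ (a'1 m)⟫‖
      ≤ Real.sqrt (1 - ‖⟪a1 m, a'1 m⟫‖ ^ 2) :=
        diff_norm_le hρ₁ (a1.orthonormal.1 m) (a'1.orthonormal.1 m)
    _ ≤ Real.sqrt (1 - ‖⟪A p, A' p⟫‖ ^ 2) := hsqrt_mono
    _ ≤ sdError A A' ρ := by
        have hval' : ‖LinearMap.trace ℂ H (ρ ∘ₗ (ketbra (A p) - ketbra (A' p)))‖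
            = Real.sqrt (1 - ‖⟪A p, A' p⟫‖ ^ 2) := by
          rw [trace_comp_ketbra_sub, hval, Complex.norm_real, Real.norm_eq_abs,
            abs_of_nonneg (Real.sqrt_nonneg _)]
        rw [← hval']
        exact le_ciSup (f := fun i : Fin d₁ × Fin d₂ =>
          ‖LinearMap.trace ℂ H (ρ ∘ₗ (ketbra (A i) - ketbra (A' i)))‖)
          (Set.Finite.bddAbove (Set.finite_range _)) p
    _ ≤ siError A A' :=
        le_ciSup (f := fun σ : {σ : H →ₗ[ℂ] H // IsDensity σ} => sdError A A' σ.1)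
          hbddBig ⟨ρ, hρ⟩
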